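/- For every node i of a directed graph, the diagonal entry ω_{ii} of the fundamental matrix Ω = (I+L)^{-1} satisfies 1/(1+d_i) ≤ ω_{ii} ≤ 2/(2+d_i), where d_i is the out-degree of node i. -/

import Mathlib

open Matrix Finset

attribute [local instance] Matrix.linftyOpNormedAddCommGroup Matrix.linftyOpNormedRing
  Matrix.linftyOpNormedAlgebra

lemma entry_nnnorm_le_nnnorm {n : ℕ} (X : Matrix (Fin n) (Fin n) ℝ) (i j : Fin n) :
    ‖X i j‖₊ ≤ ‖X‖₊ := by
  have h1 : ‖X i j‖₊ ≤ ∑ k, ‖X i k‖₊ :=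
    Finset.single_le_sum (f := fun k => ‖X i k‖₊) (fun _ _ => zero_le) (mem_univ j)
  refine h1.trans ?_
  rw [Matrix.linfty_opNNNorm_def]
  exact Finset.le_sup (f := fun i => ∑ k, ‖X i k‖₊) (mem_univ i)

lemma entry_abs_le_norm {n : ℕ} (X : Matrix (Fin n) (Fin n) ℝ) (i j : Fin n) :
    |X i j| ≤ ‖X‖ := by
  have := entry_nnnorm_le_nnnorm X i j
  rw [← Real.norm_eq_abs, ← coe_nnnorm, ← coe_nnnorm ]
  exact_mod_cast this

lemma inv_one_sub_nonneg {n : ℕ} (P : Matrix (Fin n) (Fin n) ℝ) (hnorm : ‖P‖ < 1)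
    (hPnn : ∀ i j, 0 ≤ P i j) (i j : Fin n) : 0 ≤ (1 - P)⁻¹ i j := by
  have hB : (1 - P)⁻¹ = ∑' k : ℕ, P ^ k := by
    rw [Matrix.nonsing_inv_eq_ringInverse, ← geom_series_eq_inverse P hnorm]
    rfl
  have hpow : ∀ k : ℕ, ∀ a b, 0 ≤ (P ^ k) a b := by
    intro k
    induction k with
    | zero => intro a b; simp [Matrix.one_apply]; positivity
    | succ m ih =>
        intro a b
        rw [pow_succ, Matrix.mul_apply]
        exact Finset.sum_nonneg fun c _ => mul_nonneg (ih a c) (hPnn c b)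
  have hsum : HasSum (fun k : ℕ => P ^ k) ((1 - P)⁻¹) := by
    rw [hB]; exact (summable_geometric_of_norm_lt_one hnorm).hasSum
  have htend := hsum.tendsto_sum_nat
  have htend' : Filter.Tendsto (fun N => (∑ k ∈ Finset.range N, P ^ k) i j)
      Filter.atTop (nhds ((1 - P)⁻¹ i j)) := by
    rw [tendsto_iff_dist_tendsto_zero]
    refine squeeze_zero (g := fun N => dist ((∑ k ∈ Finset.range N, P ^ k)) ((1 - P)⁻¹))
      (fun _ => dist_nonneg) (fun N => ?_) (tendsto_iff_dist_tendsto_zero.mp htend)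
    show _ ≤ dist _ _
    rw [dist_eq_norm, dist_eq_norm]
    simpa [Real.norm_eq_abs, Matrix.sub_apply] using
      entry_abs_le_norm ((∑ k ∈ Finset.range N, P ^ k) - (1 - P)⁻¹) i j
  refine ge_of_tendsto' htend' fun N => ?_
  rw [Matrix.sum_apply]
  exact Finset.sum_nonneg fun k _ => hpow k i j

theorem stmt_4 {n : ℕ} (A : Matrix (Fin n) (Fin n) ℝ)
    (hA : ∀ i j, A i j = 0 ∨ A i j = 1) (hdiag : ∀ i, A i i = 0)
    (d : Fin n → ℝ) (hd : ∀ i, d i = ∑ j, A i j)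
    (L : Matrix (Fin n) (Fin n) ℝ) (hL : L = Matrix.diagonal d - A)
    (Ω : Matrix (Fin n) (Fin n) ℝ) (hΩ : Ω = (1 + L)⁻¹) (i : Fin n) :
    1 / (1 + d i) ≤ Ω i i ∧ Ω i i ≤ 2 / (2 + d i) := by
  have hA0 : ∀ a b, 0 ≤ A a b := fun a b => by rcases hA a b with h | h <;> rw [h] <;> norm_num
  have hA1 : ∀ a b, A a b ≤ 1 := fun a b => by rcases hA a b with h | h <;> rw [h] <;> norm_num
  have hd0 : ∀ a, 0 ≤ d a := fun a => by
    rw [hd]; exact Finset.sum_nonneg fun b _ => hA0 a b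
  have hpos : ∀ a, (0:ℝ) < 1 + d a := fun a => by linarith [hd0 a]
  set P : Matrix (Fin n) (Fin n) ℝ := Matrix.of fun a b => A a b / (1 + d a) with hPdef
  have hPapp : ∀ a b, P a b = A a b / (1 + d a) := fun a b => rfl
  have hPnn : ∀ a b, 0 ≤ P a b := fun a b =>
    div_nonneg (hA0 a b) (hpos a).le
  have hProw : ∀ a, ∑ b, P a b = d a / (1 + d a) := by
    intro a
    simp only [hPapp, div_eq_mul_inv, ← Finset.sum_mul, ← hd a]
  have hnorm : ‖P‖ < 1 := by
    have hnn : ‖P‖₊ < 1 := by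
      rw [Matrix.linfty_opNNNorm_def]
      refine (Finset.sup_lt_iff (by norm_num : (⊥ : NNReal) < 1)).mpr ?_
      intro a _
      rw [← NNReal.coe_lt_coe]
      push_cast
      have he : ∀ b, (‖P a b‖₊ : ℝ) = P a b := fun b => by
        rw [coe_nnnorm, Real.norm_eq_abs, abs_of_nonneg (hPnn a b)]
      calc (∑ b, (‖P a b‖₊ : ℝ)) = ∑ b, P a b := by
            exact Finset.sum_congr rfl fun b _ => he b
        _ = d a / (1 + d a) := hProw a
        _ < 1 := by rw [div_lt_one (hpos a)]; linarith
    calc ‖P‖ = (‖P‖₊ : ℝ) := rfl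
      _ < 1 := by exact_mod_cast hnn
  have hDfact : (1 + L) = Matrix.diagonal (fun a => 1 + d a) * (1 - P) := by
    ext a b
    rw [Matrix.diagonal_mul]
    by_cases hab : a = b
    · subst hab
      simp [hL, Matrix.add_apply, Matrix.sub_apply, Matrix.one_apply_eq,
        Matrix.diagonal_apply_eq, hPapp, hdiag a]
    · simp only [hL, Matrix.add_apply, Matrix.sub_apply, Matrix.one_apply_ne hab,
        Matrix.diagonal_apply_ne _ hab, hPapp]
      have hc : (1 + d a) * (A a b / (1 + d a)) = A a b :=
        mul_div_cancel₀ _ (hpos a).ne'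
      rw [zero_add, zero_sub, zero_sub, mul_neg, hc]
  have hUnit1 : IsUnit (1 - P) := isUnit_one_sub_of_norm_lt_one hnorm
  have hUnitD : IsUnit (Matrix.diagonal (fun a => 1 + d a)) := by
    rw [Matrix.isUnit_diagonal]
    exact IsUnit.of_mul_eq_one (fun a => (1 + d a)⁻¹)
      (funext fun a => mul_inv_cancel₀ (hpos a).ne')
  have hUnitM : IsUnit (1 + L) := by rw [hDfact]; exact hUnitD.mul hUnit1
  have hMΩ : (1 + L) * Ω = 1 := by
    rw [hΩ]; exact Matrix.mul_nonsing_inv _ ((Matrix.isUnit_iff_isUnit_det _).mp hUnitM)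
  have hΩM : Ω * (1 + L) = 1 := by
    rw [hΩ]; exact Matrix.nonsing_inv_mul _ ((Matrix.isUnit_iff_isUnit_det _).mp hUnitM)
  have hDinv : (Matrix.diagonal (fun a => 1 + d a))⁻¹
      = Matrix.diagonal (fun a => (1 + d a)⁻¹) := by
    refine Matrix.inv_eq_right_inv ?_
    rw [Matrix.diagonal_mul_diagonal]
    have : (fun a => (1 + d a) * (1 + d a)⁻¹) = fun _ => (1:ℝ) :=
      funext fun a => mul_inv_cancel₀ (hpos a).ne'
    rw [this, Matrix.diagonal_one]
  have hΩfact : Ω = (1 - P)⁻¹ * Matrix.diagonal (fun a => (1 + d a)⁻¹) := by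
    rw [hΩ, hDfact, Matrix.mul_inv_rev, hDinv]
  have hΩnn : ∀ a b, 0 ≤ Ω a b := by
    intro a b
    rw [hΩfact, Matrix.mul_diagonal]
    exact mul_nonneg (inv_one_sub_nonneg P hnorm hPnn a b) (inv_nonneg.mpr (hpos b).le)
  have hMu : (1 + L) *ᵥ (fun _ => (1:ℝ)) = fun _ => 1 := by
    funext a
    simp only [Matrix.mulVec, dotProduct, mul_one, hL, Matrix.add_apply,
      Matrix.sub_apply, Matrix.one_apply, Matrix.diagonal_apply,
      Finset.sum_add_distrib, Finset.sum_sub_distrib, Finset.sum_ite_eq,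
      Finset.mem_univ, if_true]
    rw [← hd a]; ring
  have hrow : ∑ k, Ω i k = 1 := by
    have h1 : Ω *ᵥ (fun _ => (1:ℝ)) = fun _ => 1 := by
      have h2 : Ω *ᵥ ((1 + L) *ᵥ fun _ => 1) = (fun _ => (1:ℝ)) := by
        rw [Matrix.mulVec_mulVec, hΩM, Matrix.one_mulVec]
      rwa [hMu] at h2
    have := congrFun h1 i
    simpa [Matrix.mulVec, dotProduct] using this
  have hdiagMΩ : (1 + d i) * Ω i i - ∑ k, A i k * Ω k i = 1 := by
    have h : ((1 + L) * Ω) i i = (1 : Matrix (Fin n) (Fin n) ℝ) i i := by rw [hMΩ]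
    rw [Matrix.mul_apply, Matrix.one_apply_eq] at h
    simp only [hL, Matrix.add_apply, Matrix.sub_apply, Matrix.one_apply,
      Matrix.diagonal_apply, sub_mul, add_mul, ite_mul, zero_mul, one_mul,
      Finset.sum_sub_distrib, Finset.sum_add_distrib, Finset.sum_ite_eq,
      Finset.mem_univ, if_true] at h
    linarith
  have hdiagΩM : (1 + d i) * Ω i i - ∑ k, Ω i k * A k i = 1 := by
    have h : (Ω * (1 + L)) i i = (1 : Matrix (Fin n) (Fin n) ℝ) i i := by rw [hΩM]
    rw [Matrix.mul_apply, Matrix.one_apply_eq] at h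
    simp only [hL, Matrix.add_apply, Matrix.sub_apply, Matrix.one_apply,
      Matrix.diagonal_apply, mul_sub, mul_add, mul_ite, mul_zero, mul_one,
      Finset.sum_sub_distrib, Finset.sum_add_distrib, Finset.sum_ite_eq',
      Finset.mem_univ, if_true] at h
    linarith
  constructor
  · have h1 : 1 ≤ (1 + d i) * Ω i i := by
      have : 0 ≤ ∑ k, A i k * Ω k i :=
        Finset.sum_nonneg fun k _ => mul_nonneg (hA0 i k) (hΩnn k i)
      linarith
    rw [div_le_iff₀ (hpos i)]
    linarith
  · have h2 : ∑ k, Ω i k * A k i ≤ 1 - Ω i i := by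
      have hb : ∀ k ∈ Finset.univ, Ω i k * A k i
          ≤ Ω i k - (if k = i then Ω i i else 0) := by
        intro k _
        by_cases hk : k = i
        · subst hk; simp [hdiag k]
        · simp only [hk, if_false, sub_zero]
          nlinarith [hΩnn i k, hA1 k i, hA0 k i]
      calc ∑ k, Ω i k * A k i ≤ ∑ k, (Ω i k - (if k = i then Ω i i else 0)) :=
            Finset.sum_le_sum hb
        _ = (∑ k, Ω i k) - ∑ k, (if k = i then Ω i i else 0) := by
            rw [Finset.sum_sub_distrib]
        _ = 1 - Ω i i := by
            rw [hrow, Finset.sum_ite_eq' Finset.univ i (fun _ => Ω i i)]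
            simp
    rw [le_div_iff₀ (by linarith [hd0 i] : (0:ℝ) < 2 + d i)]
    nlinarith
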